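/- Let N ≥ 5 and let U = {U_ℓ : ℓ ∈ ℤ/Nℤ} be a circular chain of open arcs in the circle T¹ = ℝ/ℤ, each of diameter less than 1/4, whose union is all of T¹. Let (Û_i)_{i ∈ ℤ} be a lift of U, i.e. each Û_i is a connected component of π⁻¹(U_{i mod N}) for the projection π : ℝ → ℝ/ℤ, and Û_i ∩ Û_j ≠ ∅ if and only if i − j ∈ {−1, 0, 1}. Then there exists a nonzero integer v such that Û_{i+N} = Û_i + v for all i ∈ ℤ, and v does not depend on i nor on the choice of the lift (Û_i). -/

import Mathlib

open Set Metric

noncomputable section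
namespace CCHT

abbrev prj : ℝ → AddCircle (1:ℝ) := fun r => (r : AddCircle (1:ℝ))

lemma norm_coe (x : ℝ) : ‖(x : AddCircle (1:ℝ))‖ = |x - round x| := by
  rw [AddCircle.norm_eq]; simp

lemma dist_prj (x y : ℝ) : dist (prj x) (prj y) = |x - y - round (x - y)| := by
  rw [dist_eq_norm]
  have : prj x - prj y = ((x - y : ℝ) : AddCircle (1:ℝ)) := by
    simp [prj, AddCircle.coe_sub]
  rw [this, norm_coe]

/-- The piece of the preimage over a chart interval is preconnected. -/
lemma piece_preconnected (S : Set (AddCircle (1:ℝ))) (hconn : IsPreconnected S)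
    (hbd : Metric.diam S < 1/4) (c : ℝ) (hc : prj c ∈ S) :
    IsPreconnected (prj ⁻¹' S ∩ Ioo (c - 1/4) (c + 1/4)) := by
  have hb : Bornology.IsBounded S := (isCompact_univ.isBounded).subset (subset_univ _)
  set a : ℝ := c - 3/4 with ha
  have ha1 : a + 1 = c + 1/4 := by rw [ha]; ring
  set σ : AddCircle (1:ℝ) → ℝ := fun s => ((AddCircle.equivIoc 1 a s : Ioc a (a+1)) : ℝ) with hσ
  have hprjσ : ∀ s : AddCircle (1:ℝ), prj (σ s) = s := fun s =>
    (AddCircle.equivIoc 1 a).symm_apply_apply s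
  have hane : ∀ s ∈ S, s ≠ (a : AddCircle (1:ℝ)) := by
    intro s hs he
    have hd := Metric.dist_le_diam_of_mem hb hs hc
    rw [he] at hd
    have : dist ((a : AddCircle (1:ℝ))) (prj c) = |a - c - round (a - c)| := dist_prj a c
    have hac : a - c = -(3/4) := by rw [ha]; ring
    rw [this, hac] at hd
    have hfl : ⌊(-(1/4) : ℝ)⌋ = -1 := by
      rw [Int.floor_eq_iff]
      constructor <;> norm_num
    have hr : round ((-(3/4) : ℝ)) = -1 := by
      rw [round_eq, show (-(3/4) + 1/2 : ℝ) = -(1/4) by ring, hfl]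
    rw [hr] at hd
    have : |(-(3/4) : ℝ) - (-1 : ℤ)| = 1/4 := by norm_num
    rw [this] at hd
    linarith
  have hcont : ContinuousOn σ S := by
    intro s hs
    exact ((continuous_subtype_val.continuousAt).comp
      (AddCircle.continuousAt_equivIoc 1 a (hane s hs))).continuousWithinAt
  have himg : σ '' S = prj ⁻¹' S ∩ Ioo (c - 1/4) (c + 1/4) := by
    ext z
    constructor
    · rintro ⟨s, hs, rfl⟩
      have hmem : σ s ∈ Ioc a (a + 1) := (AddCircle.equivIoc 1 a s).2
      have hd := Metric.dist_le_diam_of_mem hb hs hc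
      rw [show s = prj (σ s) from (hprjσ s).symm, dist_prj] at hd
      have h4 : |σ s - c - round (σ s - c)| < 1/4 := lt_of_le_of_lt hd hbd
      rw [ha1] at hmem
      have h1 : σ s - c ≤ 1/4 := by linarith [hmem.2]
      have h2 : c - 3/4 < σ s := hmem.1
      have hr0 : round (σ s - c) = 0 := by
        have : |(round (σ s - c) : ℝ)| < 1 := by
          have := abs_lt.mp h4
          have habs : |σ s - c| ≤ 3/4 := abs_le.mpr ⟨by linarith, by linarith⟩
          have := abs_le.mp habs
          rw [abs_lt]
          constructor <;> linarith
        have h5 : |round (σ s - c)| < 1 := by exact_mod_cast this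
        rw [abs_lt] at h5
        omega
      rw [hr0] at h4
      norm_num at h4
      have := abs_lt.mp h4
      exact ⟨by rw [mem_preimage, hprjσ s]; exact hs, by constructor <;> linarith⟩
    · rintro ⟨hzS, hz1, hz2⟩
      refine ⟨prj z, hzS, ?_⟩
      have hmem : z ∈ Ioc a (a + 1) := by rw [ha1]; exact ⟨by rw [ha]; linarith, le_of_lt hz2⟩
      have : AddCircle.equivIoc 1 a (prj z) = ⟨z, hmem⟩ := by
        rw [Equiv.apply_eq_iff_eq_symm_apply]
        rfl
      rw [hσ]; simp only [this]
  rw [← himg]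
  exact hconn.image σ hcont


/-- Points of the preimage are within 1/4 of an integer translate of `x`. -/
lemma preimage_near (S : Set (AddCircle (1:ℝ))) (hbd : Metric.diam S < 1/4)
    (x : ℝ) (hx : prj x ∈ S) {z : ℝ} (hz : prj z ∈ S) :
    |z - x - round (z - x)| < 1/4 := by
  have hb : Bornology.IsBounded S := (isCompact_univ.isBounded).subset (subset_univ _)
  have := Metric.dist_le_diam_of_mem hb hz hx
  rw [dist_prj] at this
  linarith

lemma prj_add_int (z : ℝ) (n : ℤ) : prj (z + n) = prj z := by
  simp [prj]

/-- Identification of connected components of the preimage. -/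
lemma comp_eq (S : Set (AddCircle (1:ℝ))) (hconn : IsPreconnected S)
    (hbd : Metric.diam S < 1/4) (x : ℝ) (hx : prj x ∈ S) (y : ℝ) (hy : prj y ∈ S) :
    connectedComponentIn (prj ⁻¹' S) y
      = prj ⁻¹' S ∩ Ioo (x + round (y - x) - 1/4) (x + round (y - x) + 1/4) := by
  set c : ℝ := x + round (y - x) with hc
  have hprjc : prj c = prj x := prj_add_int x _
  have hcS : prj c ∈ S := by rw [hprjc]; exact hx
  have hyP : y ∈ prj ⁻¹' S ∩ Ioo (c - 1/4) (c + 1/4) := by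
    refine ⟨hy, ?_, ?_⟩
    · have := abs_lt.mp (preimage_near S hbd x hx hy)
      rw [hc]; linarith [this.1]
    · have := abs_lt.mp (preimage_near S hbd x hx hy)
      rw [hc]; linarith [this.2]
  apply Subset.antisymm
  · -- component ⊆ piece
    have hsub : connectedComponentIn (prj ⁻¹' S) y ⊆ prj ⁻¹' S := connectedComponentIn_subset _ _
    refine subset_inter hsub ?_
    set u : Set ℝ := Ioo (c - 1/4) (c + 1/4) with hu
    set v : Set ℝ := ⋃ (m : ℤ) (_ : m ≠ 0), Ioo (c + m - 1/4) (c + m + 1/4) with hv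
    have hou : IsOpen u := isOpen_Ioo
    have hov : IsOpen v := isOpen_iUnion fun m => isOpen_iUnion fun _ => isOpen_Ioo
    have hdis : Disjoint u v := by
      rw [Set.disjoint_left]
      rintro z ⟨hz1, hz2⟩ hzv
      rw [hv, mem_iUnion] at hzv
      obtain ⟨m, hzv⟩ := hzv
      rw [mem_iUnion] at hzv
      obtain ⟨hm, hzm1, hzm2⟩ := hzv
      have : |(m : ℝ)| < 1 := by
        rw [abs_lt]; constructor <;> linarith
      have : |m| < 1 := by exact_mod_cast this
      rw [abs_lt] at this
      omega
    have hcov : connectedComponentIn (prj ⁻¹' S) y ⊆ u ∪ v := by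
      intro z hz
      have hzS : prj z ∈ S := hsub hz
      have h4 := abs_lt.mp (preimage_near S hbd x hx hzS)
      by_cases hcase : round (z - x) = round (y - x)
      · left
        rw [hu, hc, ← hcase]
        constructor <;> linarith [h4.1, h4.2]
      · right
        rw [hv, mem_iUnion]
        refine ⟨round (z - x) - round (y - x), ?_⟩
        rw [mem_iUnion]
        refine ⟨by omega, ?_, ?_⟩ <;>
        · rw [hc]; push_cast; linarith [h4.1, h4.2]
    have := (isPreconnected_connectedComponentIn).subset_left_of_subset_union hou hov hdis hcov
      ⟨y, mem_connectedComponentIn hyP.1, hyP.2⟩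
    exact this
  · exact (piece_preconnected S hconn hbd c hcS).subset_connectedComponentIn hyP
      (inter_subset_left)


/-- `A` is a connected component of the preimage of `S`. -/
def IsComp (S : Set (AddCircle (1:ℝ))) (A : Set ℝ) : Prop :=
  ∃ x ∈ A, A = connectedComponentIn (prj ⁻¹' S) x

lemma IsComp.base_mem {S : Set (AddCircle (1:ℝ))} {A : Set ℝ} (hA : IsComp S A) :
    ∃ x, prj x ∈ S ∧ x ∈ A ∧ A = connectedComponentIn (prj ⁻¹' S) x := by
  obtain ⟨x, hxA, hAx⟩ := hA
  refine ⟨x, ?_, hxA, hAx⟩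
  have : x ∈ connectedComponentIn (prj ⁻¹' S) x := by rw [← hAx]; exact hxA
  exact connectedComponentIn_subset (prj ⁻¹' S) x this

lemma IsComp.eq_piece {S : Set (AddCircle (1:ℝ))} (hconn : IsPreconnected S)
    (hbd : Metric.diam S < 1/4) {A : Set ℝ} (hA : IsComp S A) {x : ℝ} (hx : prj x ∈ S) :
    ∃ m : ℤ, A = prj ⁻¹' S ∩ Ioo (x + m - 1/4) (x + m + 1/4) := by
  obtain ⟨y, hyS, hyA, hAy⟩ := hA.base_mem
  exact ⟨round (y - x), by rw [hAy, comp_eq S hconn hbd x hx y hyS]⟩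

lemma IsComp.width {S : Set (AddCircle (1:ℝ))} (hconn : IsPreconnected S)
    (hbd : Metric.diam S < 1/4) {A : Set ℝ} (hA : IsComp S A) :
    ∀ a ∈ A, ∀ b ∈ A, |a - b| < 1/2 := by
  obtain ⟨x, hxS, _, _⟩ := hA.base_mem
  obtain ⟨m, hm⟩ := hA.eq_piece hconn hbd hxS
  intro a ha b hb
  rw [hm] at ha hb
  obtain ⟨_, ha1, ha2⟩ := ha
  obtain ⟨_, hb1, hb2⟩ := hb
  rw [abs_lt]
  constructor <;> linarith

lemma IsComp.translate {S : Set (AddCircle (1:ℝ))} (hconn : IsPreconnected S)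
    (hbd : Metric.diam S < 1/4) {A B : Set ℝ} (hA : IsComp S A) (hB : IsComp S B) :
    ∃ m : ℤ, B = (fun t => t + (m : ℝ)) '' A := by
  obtain ⟨x, hxS, _, _⟩ := hA.base_mem
  obtain ⟨k, hk⟩ := hA.eq_piece hconn hbd hxS
  obtain ⟨l, hl⟩ := hB.eq_piece hconn hbd hxS
  refine ⟨l - k, ?_⟩
  ext z
  simp only [mem_image]
  constructor
  · intro hz
    refine ⟨z - ((l - k : ℤ) : ℝ), ?_, by ring⟩
    rw [hl] at hz
    obtain ⟨hzS, hz1, hz2⟩ := hz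
    rw [hk]
    refine ⟨?_, ?_, ?_⟩
    · show prj _ ∈ S
      rw [show z - ((l - k : ℤ) : ℝ) = z + ((-(l - k) : ℤ) : ℝ) by push_cast; ring,
        prj_add_int]
      exact hzS
    · push_cast; push_cast at hz1; linarith
    · push_cast; push_cast at hz2; linarith
  · rintro ⟨t, ht, rfl⟩
    rw [hk] at ht
    obtain ⟨htS, ht1, ht2⟩ := ht
    rw [hl]
    refine ⟨?_, ?_, ?_⟩
    · show prj _ ∈ S
      rw [prj_add_int]
      exact htS
    · push_cast; push_cast at ht1; linarith
    · push_cast; push_cast at ht2; linarith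


lemma int_abs_lt_one {m k : ℤ} (h : |(m : ℝ) - k| < 1) : m = k := by
  have h1 : |((m - k : ℤ) : ℝ)| < 1 := by push_cast; exact h
  rw [← Int.cast_abs] at h1
  have h2 : |m - k| < 1 := by exact_mod_cast h1
  have := abs_lt.mp h2
  omega

lemma translate_eq {A B : Set ℝ} {m k : ℤ}
    (hA : ∀ a ∈ A, ∀ b ∈ A, |a - b| < 1/2) (hB : ∀ a ∈ B, ∀ b ∈ B, |a - b| < 1/2)
    (h1 : (A ∩ B).Nonempty)
    (h2 : (((fun t => t + (m:ℝ)) '' A) ∩ ((fun t => t + (k:ℝ)) '' B)).Nonempty) :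
    m = k := by
  obtain ⟨w, hwA, hwB⟩ := h1
  obtain ⟨z, ⟨a, haA, haz⟩, ⟨b, hbB, hbz⟩⟩ := h2
  have h3 : |a - w| < 1/2 := hA a haA w hwA
  have h4 : |b - w| < 1/2 := hB b hbB w hwB
  apply int_abs_lt_one
  have : (m : ℝ) - k = b - a := by
    have : a + (m:ℝ) = b + (k:ℝ) := by
      simp only [] at haz hbz; rw [haz, hbz]
    linarith
  rw [this]
  calc |b - a| = |(b - w) - (a - w)| := by ring_nf
    _ ≤ |b - w| + |a - w| := abs_sub _ _
    _ < 1 := by linarith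

lemma const_of_step (f : ℤ → ℤ) (h : ∀ i, f i = f (i + 1)) : ∀ i, f i = f 0 := by
  intro i
  induction i using Int.induction_on with
  | zero => rfl
  | succ n ih => rw [← h n]; exact ih
  | pred n ih =>
      have h2 := h (-(n:ℤ) - 1)
      rw [show (-(n:ℤ) - 1 + 1) = -(n:ℤ) by ring] at h2
      rw [h2]; exact ih

end CCHT


open Set CCHT

/-- `Û` is a lift to `ℝ` of the circular chain `U` of subsets of the circle `ℝ/ℤ`:
each `Û i` is a connected component of the preimage of `U (i mod N)` under the
projection `π : ℝ → ℝ/ℤ`, and `Û i` meets `Û j` iff `i − j ∈ {−1,0,1}`. -/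
def IsChainLift (N : ℕ) (U : ZMod N → Set (AddCircle (1:ℝ))) (Uhat : ℤ → Set ℝ) : Prop :=
  (∀ i : ℤ, ∃ x ∈ Uhat i,
      Uhat i = connectedComponentIn ((fun r : ℝ => (r : AddCircle (1:ℝ))) ⁻¹' U (i : ZMod N)) x) ∧
  (∀ i j : ℤ, (Uhat i ∩ Uhat j).Nonempty ↔ i - j ∈ ({-1, 0, 1} : Set ℤ))

namespace CCHT

lemma chainlift_isComp {N : ℕ} {U : ZMod N → Set (AddCircle (1:ℝ))} {W : ℤ → Set ℝ}
    (hW : IsChainLift N U W) (i : ℤ) : IsComp (U (i : ZMod N)) (W i) := hW.1 i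

lemma chainlift_isComp' {N : ℕ} {U : ZMod N → Set (AddCircle (1:ℝ))} {W : ℤ → Set ℝ}
    (hW : IsChainLift N U W) (i : ℤ) : IsComp (U (i : ZMod N)) (W (i + N)) := by
  have h := hW.1 (i + N)
  have he : (((i + (N:ℤ)) : ℤ) : ZMod N) = (i : ZMod N) := by push_cast; simp
  rwa [he] at h

lemma chainlift_width {N : ℕ} {U : ZMod N → Set (AddCircle (1:ℝ))}
    (harc : ∀ ℓ, IsConnected (U ℓ)) (hdiam : ∀ ℓ, Metric.diam (U ℓ) < 1/4)
    {W : ℤ → Set ℝ} (hW : IsChainLift N U W) (i : ℤ) :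
    ∀ a ∈ W i, ∀ b ∈ W i, |a - b| < 1/2 :=
  (chainlift_isComp hW i).width (harc _).isPreconnected (hdiam _)

/-- Any lift of the chain is shifted by a constant integer under `i ↦ i + N`. -/
lemma lift_shift {N : ℕ} {U : ZMod N → Set (AddCircle (1:ℝ))}
    (harc : ∀ ℓ, IsConnected (U ℓ)) (hdiam : ∀ ℓ, Metric.diam (U ℓ) < 1/4)
    {W : ℤ → Set ℝ} (hW : IsChainLift N U W) :
    ∃ v : ℤ, ∀ i : ℤ, W (i + N) = (fun x => x + (v : ℝ)) '' W i := by
  choose v hv using fun i : ℤ =>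
    ((chainlift_isComp hW i).translate (harc _).isPreconnected (hdiam _)
      (chainlift_isComp' hW i))
  have hstep : ∀ i : ℤ, v i = v (i + 1) := by
    intro i
    refine translate_eq (chainlift_width harc hdiam hW i)
      (chainlift_width harc hdiam hW (i+1)) ?_ ?_
    · exact (hW.2 i (i+1)).mpr (by simp)
    · rw [← hv i, ← hv (i+1)]
      refine (hW.2 (i + N) ((i+1) + N)).mpr ?_
      have he : (i + (N:ℤ)) - ((i+1) + (N:ℤ)) = -1 := by ring
      rw [he]; simp
  refine ⟨v 0, fun i => ?_⟩
  rw [hv i, const_of_step v hstep i]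

/-- Any two lifts differ by a constant integer translation. -/
lemma lift_compare {N : ℕ} {U : ZMod N → Set (AddCircle (1:ℝ))}
    (harc : ∀ ℓ, IsConnected (U ℓ)) (hdiam : ∀ ℓ, Metric.diam (U ℓ) < 1/4)
    {W W' : ℤ → Set ℝ} (hW : IsChainLift N U W) (hW' : IsChainLift N U W') :
    ∃ m : ℤ, ∀ i : ℤ, W' i = (fun x => x + (m : ℝ)) '' W i := by
  choose m hm using fun i : ℤ =>
    ((chainlift_isComp hW i).translate (harc _).isPreconnected (hdiam _)
      (chainlift_isComp hW' i))
  have hstep : ∀ i : ℤ, m i = m (i + 1) := by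
    intro i
    refine translate_eq (chainlift_width harc hdiam hW i)
      (chainlift_width harc hdiam hW (i+1)) ?_ ?_
    · exact (hW.2 i (i+1)).mpr (by simp)
    · rw [← hm i, ← hm (i+1)]
      exact (hW'.2 i (i+1)).mpr (by simp)
  refine ⟨m 0, fun i => ?_⟩
  rw [hm i, const_of_step m hstep i]

end CCHT

/-- A circular chain of open arcs of diameter `< 1/4` covering the circle has a
well-defined nonzero homotopy type (winding number) `v`: any lift satisfies
`Û (i+N) = Û i + v`, with `v` independent of the lift. -/
theorem circular_chain_homotopy_type (N : ℕ) (hN : 5 ≤ N)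
    (U : ZMod N → Set (AddCircle (1:ℝ)))
    (hopen : ∀ ℓ, IsOpen (U ℓ))
    (harc : ∀ ℓ, IsConnected (U ℓ))
    (hdiam : ∀ ℓ, Metric.diam (U ℓ) < 1/4)
    (hcover : (⋃ ℓ, U ℓ) = Set.univ)
    (hchain : ∀ k ℓ : ZMod N, (U k ∩ U ℓ).Nonempty ↔ k - ℓ ∈ ({-1, 0, 1} : Set (ZMod N)))
    (Uhat : ℤ → Set ℝ) (hlift : IsChainLift N U Uhat) :
    ∃ v : ℤ, v ≠ 0 ∧
      ∀ Uhat' : ℤ → Set ℝ, IsChainLift N U Uhat' →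
        ∀ i : ℤ, Uhat' (i + N) = (fun x => x + (v : ℝ)) '' Uhat' i := by
  obtain ⟨v, hv⟩ := CCHT.lift_shift harc hdiam hlift
  have hvne : v ≠ 0 := by
    intro h0
    have h1 := hv 0
    rw [h0] at h1
    simp only [Int.cast_zero, add_zero, Set.image_id'] at h1
    obtain ⟨x, hx, -⟩ := hlift.1 0
    have h2 : ((0:ℤ) + N) - 0 ∈ ({-1, 0, 1} : Set ℤ) := by
      rw [← hlift.2, h1]
      exact ⟨x, hx, hx⟩
    simp only [Set.mem_insert_iff, Set.mem_singleton_iff] at h2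
    omega
  refine ⟨v, hvne, fun W' hW' i => ?_⟩
  obtain ⟨m, hm⟩ := CCHT.lift_compare harc hdiam hlift hW'
  rw [hm (i + N), hm i, hv i, Set.image_image, Set.image_image]
  have : (fun a : ℝ => a + (v:ℝ) + m) = (fun a : ℝ => a + (m:ℝ) + v) := by
    funext a; ring
  rw [this]
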